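/- Let A₁, …, A_d ∈ ℂ^{n×n} be matrices such that for every k ∈ ℝ^d all eigenvalues of k₁A₁ + ⋯ + k_dA_d are real (weak hyperbolicity), and suppose A₁ is invertible. Then for every λ ∈ ℂ with Re(λ) > 0 and every ξ = (ξ₂,…,ξ_d) ∈ ℝ^{d−1}, the matrix −A₁⁻¹(λ·I + i ξ₂A₂ + ⋯ + i ξ_dA_d) has no purely imaginary eigenvalue (no eigenvalue with zero real part). -/

import Mathlib

/-- Hersh-type lemma (used in Corollary 2.16): if `k₁A₁ + k₂A₂ + ⋯ + k_dA_d` has only real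
eigenvalues for all real `k` (weak hyperbolicity) and `A₁` is invertible, then for every
`λ` with `Re λ > 0` and every real transverse frequency `ξ`, the matrix
`−A₁⁻¹(λI + iξ₂A₂ + ⋯ + iξ_dA_d)` has no purely imaginary eigenvalue. -/
theorem hersh_no_center_subspace {n d : ℕ}
    (A₁ : Matrix (Fin n) (Fin n) ℂ)
    (A : Fin d → Matrix (Fin n) (Fin n) ℂ)  -- the matrices A₂, …, A_d
    (hweak : ∀ (k₁ : ℝ) (k : Fin d → ℝ) (μ : ℂ),
      Module.End.HasEigenvalue
        (Matrix.mulVecLin ((k₁ : ℂ) • A₁ + ∑ j, (k j : ℂ) • A j)) μ → μ.im = 0)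
    (hA₁ : IsUnit A₁)
    (lam : ℂ) (hlam : 0 < lam.re) (ξ : Fin d → ℝ) :
    ∀ μ : ℂ,
      Module.End.HasEigenvalue
        (Matrix.mulVecLin
          (-(A₁⁻¹ * (lam • (1 : Matrix (Fin n) (Fin n) ℂ)
              + ∑ j, (Complex.I * (ξ j : ℂ)) • A j)))) μ →
      μ.re ≠ 0 := by
  intro μ hμ hre
  set C : Matrix (Fin n) (Fin n) ℂ :=
    lam • (1 : Matrix (Fin n) (Fin n) ℂ) + ∑ j, (Complex.I * (ξ j : ℂ)) • A j with hC
  obtain ⟨v, hv⟩ := hμ.exists_hasEigenvector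
  have hv0 : v ≠ 0 := hv.right
  have happ : (-(A₁⁻¹ * C)).mulVec v = μ • v := by
    have := hv.apply_eq_smul
    rw [Matrix.neg_mulVec]
    simpa [Matrix.mulVecLin_apply] using this
  have hdet : IsUnit A₁.det := (Matrix.isUnit_iff_isUnit_det A₁).mp hA₁
  -- multiply by A₁
  have hC1 : C.mulVec v = (-μ) • A₁.mulVec v := by
    have h1 : (A₁⁻¹ * C).mulVec v = (-μ) • v := by
      have : -((A₁⁻¹ * C).mulVec v) = μ • v := by
        rw [← Matrix.neg_mulVec]; exact happ
      have := congrArg Neg.neg this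
      simpa [neg_smul] using this
    calc C.mulVec v = (A₁ * (A₁⁻¹ * C)).mulVec v := by
          rw [← Matrix.mul_assoc, Matrix.mul_nonsing_inv A₁ hdet, Matrix.one_mul]
      _ = A₁.mulVec ((A₁⁻¹ * C).mulVec v) := by rw [← Matrix.mulVec_mulVec]
      _ = A₁.mulVec ((-μ) • v) := by rw [h1]
      _ = (-μ) • A₁.mulVec v := by rw [Matrix.mulVec_smul]
  set b : ℝ := μ.im with hb
  have hμI : μ = Complex.I * (b : ℂ) := by
    apply Complex.ext <;> simp [hre, hb]
  set B : Matrix (Fin n) (Fin n) ℂ := (b : ℂ) • A₁ + ∑ j, ((ξ j : ℂ)) • A j with hB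
  -- matrix identity : I • B = μ • A₁ + C - lam • 1
  have hIB : Complex.I • B = μ • A₁ + C - lam • (1 : Matrix (Fin n) (Fin n) ℂ) := by
    rw [hB, hC, smul_add, Finset.smul_sum]
    simp_rw [smul_smul]
    rw [hμI]
    abel
  have hBv : Complex.I • B.mulVec v = (-lam) • v := by
    rw [← Matrix.smul_mulVec, hIB]
    rw [sub_eq_add_neg, Matrix.add_mulVec, Matrix.add_mulVec, Matrix.neg_mulVec,
      Matrix.smul_mulVec, Matrix.smul_mulVec, Matrix.one_mulVec, hC1]
    module
  have hBv' : B.mulVec v = (Complex.I * lam) • v := by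
    have := congrArg (fun w => (-Complex.I : ℂ) • w) hBv
    simp only [smul_smul] at this
    have h2 : (-Complex.I) * Complex.I = 1 := by
      simp [Complex.I_mul_I]
    rw [h2, one_smul] at this
    rw [this]
    congr 1
    ring
  have hev : Module.End.HasEigenvalue (Matrix.mulVecLin B) (Complex.I * lam) := by
    apply Module.End.hasEigenvalue_of_hasEigenvector (x := v)
    refine ⟨?_, hv0⟩
    rw [Module.End.mem_eigenspace_iff, Matrix.mulVecLin_apply, hBv']
  have := hweak b ξ (Complex.I * lam) hev
  simp [Complex.mul_im] at this
  rw [this] at hlam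
  exact lt_irrefl 0 hlam
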